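/- If X and Z are μ-comonotonic random vectors with densities (X = Q_X(U), Z = Q_Z(U) for a common U =_d μ), then X is μ-Bickel-Lehmann less dispersed than X + Z. -/

import Mathlib

open MeasureTheory Set Filter Topology InnerProductSpace TopologicalSpace
open scoped RealInnerProductSpace

noncomputable section

namespace Stmt13Aux

variable {F : Type*} [NormedAddCommGroup F] [InnerProductSpace ℝ F] [CompleteSpace F]

lemma oneDim_le {φ : ℝ → ℝ} (hφ : ConvexOn ℝ univ φ) {m : ℝ} (hm : HasDerivAt φ m 0) :
    φ 0 + m ≤ φ 1 := by
  have ht : Tendsto (slope φ 0) (𝓝[>] 0) (𝓝 m) :=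
    (hasDerivAt_iff_tendsto_slope.1 hm).mono_left
      (nhdsWithin_mono _ (fun t ht => ne_of_gt ht))
  have hev : ∀ᶠ t in 𝓝[>] (0:ℝ), slope φ 0 t ≤ φ 1 - φ 0 := by
    filter_upwards [Ioo_mem_nhdsGT_of_mem (Set.left_mem_Ico.2 zero_lt_one)] with t ht
    have := hφ.secant_mono (mem_univ 0) (mem_univ t) (mem_univ 1)
      (ne_of_gt ht.1) one_ne_zero ht.2.le
    simpa [slope_def_field, slope, div_eq_mul_inv, mul_comm] using this
  have := le_of_tendsto ht hev
  linarith

lemma oneDim_ge {φ : ℝ → ℝ} {m c : ℝ} (hm : HasDerivAt φ m 0)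
    (h : ∀ t : ℝ, 0 < t → c ≤ (φ t - φ 0) / t) : c ≤ m := by
  have ht : Tendsto (slope φ 0) (𝓝[>] 0) (𝓝 m) :=
    (hasDerivAt_iff_tendsto_slope.1 hm).mono_left
      (nhdsWithin_mono _ (fun t ht => ne_of_gt ht))
  have hev : ∀ᶠ t in 𝓝[>] (0:ℝ), c ≤ slope φ 0 t := by
    filter_upwards [self_mem_nhdsWithin] with t ht
    simpa [slope_def_field, slope, div_eq_mul_inv, mul_comm] using h t ht
  exact ge_of_tendsto ht hev

lemma line_hasDerivAt {f : F → ℝ} {p x v : F} (h : HasGradientAt f p x) :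
    HasDerivAt (fun t : ℝ => f (t • v + x)) ⟪p, v⟫_ℝ 0 := by
  have hc : HasDerivAt (fun t : ℝ => t • v + x) v 0 := by
    simpa using ((hasDerivAt_id (0:ℝ)).smul_const v).add_const x
  have hF : HasFDerivAt f (toDual ℝ F p) ((0:ℝ) • v + x) := by
    simpa using h.hasFDerivAt
  have := hF.comp_hasDerivAt 0 hc
  simp only [toDual_apply_apply] at this; exact this

lemma convex_support {f : F → ℝ} (hf : ConvexOn ℝ univ f)
    {x p : F} (h : HasGradientAt f p x) (z : F) : f x + ⟪p, z - x⟫_ℝ ≤ f z := by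
  set φ : ℝ → ℝ := fun t => f (t • (z - x) + x) with hφdef
  have hconv : ConvexOn ℝ univ φ := by
    have := hf.comp_affineMap (AffineMap.lineMap x z)
    change ConvexOn ℝ univ φ at this
    simpa [hφdef, Set.preimage_univ, Function.comp] using this
  have hd : HasDerivAt φ ⟪p, z - x⟫_ℝ 0 := line_hasDerivAt h
  have := oneDim_le hconv hd
  simpa [hφdef] using this

lemma eq_gradient_of_subgradient {f : F → ℝ} {x p q : F}
    (h : HasGradientAt f q x) (hp : ∀ z, f x + ⟪p, z - x⟫_ℝ ≤ f z) : p = q := by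
  have hv : ∀ v : F, ⟪p, v⟫_ℝ ≤ ⟪q, v⟫_ℝ := by
    intro v
    have hd : HasDerivAt (fun t : ℝ => f (t • v + x)) ⟪q, v⟫_ℝ 0 := line_hasDerivAt h
    refine oneDim_ge hd (fun t ht => ?_)
    have h1 := hp (t • v + x)
    have h2 : ⟪p, (t • v + x) - x⟫_ℝ = t * ⟪p, v⟫_ℝ := by
      simp [real_inner_smul_right]
    rw [h2] at h1
    have h0 : f ((0:ℝ) • v + x) = f x := by norm_num
    rw [h0, le_div_iff₀ ht]
    linarith [mul_comm t (⟪p, v⟫_ℝ)]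
  have h1 := hv (p - q)
  have h2 : ⟪p - q, p - q⟫_ℝ ≤ 0 := by
    rw [inner_sub_left]; linarith
  have h3 : ⟪p - q, p - q⟫_ℝ = 0 := le_antisymm h2 real_inner_self_nonneg
  have := inner_self_eq_zero.1 h3
  exact sub_eq_zero.1 this

end Stmt13Aux

open MeasureTheory Set Filter Topology InnerProductSpace TopologicalSpace
open scoped RealInnerProductSpace

noncomputable section

namespace Stmt13Aux2

variable {d : ℕ}

local notation "E" => EuclideanSpace ℝ (Fin d)

lemma locallyLipschitz_ae_diff {f : E → ℝ} (hf : LocallyLipschitz f) :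
    ∀ᵐ x ∂(volume : Measure E), DifferentiableAt ℝ f x := by
  choose K t ht hK using hf
  have hmem : ∀ x : E, interior (t x) ∈ 𝓝 x := fun x => interior_mem_nhds.2 (ht x)
  obtain ⟨T, hTc, hTu⟩ := TopologicalSpace.countable_cover_nhds hmem
  have H : ∀ x ∈ T, ∀ᵐ y ∂(volume : Measure E), y ∈ interior (t x) → DifferentiableAt ℝ f y := by
    intro x _
    have hl : LipschitzOnWith (K x) f (interior (t x)) := (hK x).mono interior_subset
    filter_upwards [hl.ae_differentiableWithinAt_of_mem] with y hy hyi
    exact (hy hyi).differentiableAt (isOpen_interior.mem_nhds hyi)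
  filter_upwards [(ae_ball_iff hTc).2 H] with y hy
  have hmemy : y ∈ ⋃ x ∈ T, interior (t x) := by rw [hTu]; trivial
  simp only [mem_iUnion] at hmemy
  obtain ⟨x, hxT, hyx⟩ := hmemy
  exact hy x hxT hyx

/-- countable-sup Fenchel conjugate -/
def conj (f : E → ℝ) (y : E) : EReal :=
  ⨆ n : ℕ, ((⟪denseSeq E n, y⟫_ℝ - f (denseSeq E n) : ℝ) : EReal)

lemma conj_ne_bot (f : E → ℝ) (y : E) : conj f y ≠ ⊥ := by
  intro hb
  have h : ((⟪denseSeq E 0, y⟫_ℝ - f (denseSeq E 0) : ℝ) : EReal) ≤ conj f y :=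
    le_iSup (fun n : ℕ => ((⟪denseSeq E n, y⟫_ℝ - f (denseSeq E n) : ℝ) : EReal)) 0
  rw [hb] at h
  exact (EReal.bot_lt_coe _).not_ge h
  
lemma measurable_conj {f : E → ℝ} : Measurable (conj f) := by
  refine Measurable.iSup (fun n => ?_)
  exact measurable_coe_real_ereal.comp
    (((continuous_const.inner continuous_id).sub continuous_const).measurable)

lemma conj_le {f : E → ℝ} (hfc : Continuous f) (y z : E) :
    ((⟪z, y⟫_ℝ - f z : ℝ) : EReal) ≤ conj f y := by
  by_contra hlt
  push_neg at hlt
  have hnetop : conj f y ≠ ⊤ := ne_top_of_lt hlt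
  have hnebot := conj_ne_bot f y
  set a := (conj f y).toReal with ha
  have hcoe : conj f y = (a : EReal) := (EReal.coe_toReal hnetop hnebot).symm
  rw [hcoe, EReal.coe_lt_coe_iff] at hlt
  have hcont : Continuous (fun w : E => ⟪w, y⟫_ℝ - f w) :=
    (continuous_id.inner continuous_const).sub hfc
  have hopen : IsOpen ((fun w : E => ⟪w, y⟫_ℝ - f w) ⁻¹' Ioi a) := isOpen_Ioi.preimage hcont
  have hne : ((fun w : E => ⟪w, y⟫_ℝ - f w) ⁻¹' Ioi a).Nonempty := ⟨z, hlt⟩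
  obtain ⟨n, hn⟩ := (denseRange_denseSeq E).exists_mem_open hopen hne
  have h1 : ((⟪denseSeq E n, y⟫_ℝ - f (denseSeq E n) : ℝ) : EReal) ≤ conj f y :=
    le_iSup (fun n : ℕ => ((⟪denseSeq E n, y⟫_ℝ - f (denseSeq E n) : ℝ) : EReal)) n
  rw [hcoe, EReal.coe_le_coe_iff] at h1
  exact absurd h1 (not_le.2 hn)

lemma conj_of_hasGradientAt {f : E → ℝ} (hf : ConvexOn ℝ univ f) {x p : E}
    (h : HasGradientAt f p x) : conj f p = ((⟪x, p⟫_ℝ - f x : ℝ) : EReal) := by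
  refine le_antisymm (iSup_le fun n => ?_) (conj_le hf.locallyLipschitz.continuous p x)
  rw [EReal.coe_le_coe_iff]
  have h1 := Stmt13Aux.convex_support hf h (denseSeq E n)
  have h2 : ⟪p, denseSeq E n - x⟫_ℝ = ⟪denseSeq E n, p⟫_ℝ - ⟪x, p⟫_ℝ := by
    rw [inner_sub_right, real_inner_comm p (denseSeq E n), real_inner_comm p x]
  linarith [h1, h2.symm ▸ h1]
  
end Stmt13Aux2

namespace Stmt13Core

open MeasureTheory Set Filter Topology InnerProductSpace TopologicalSpace Real
open scoped RealInnerProductSpace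

noncomputable section

variable {d : ℕ}

local notation "E" => EuclideanSpace ℝ (Fin d)

open Stmt13Aux Stmt13Aux2

/-- Uniqueness of gradient-of-convex pushforwards (McCann uniqueness),
proven via a bounded Fenchel-defect argument. -/
lemma gradient_pushforward_unique (μ : Measure E) [IsProbabilityMeasure μ]
    {Φ W : E → ℝ} (hΦ : ConvexOn ℝ univ Φ) (hW : ConvexOn ℝ univ W)
    {f g : E → E} (hf : ∀ᵐ x ∂μ, HasGradientAt W (f x) x)
    (hg : ∀ᵐ x ∂μ, HasGradientAt Φ (g x) x)
    (hfm : AEMeasurable f μ) (hgm : AEMeasurable g μ)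
    (hmap : μ.map f = μ.map g) : ∀ᵐ x ∂μ, f x = g x := by
  classical
  have hΦc : Continuous Φ := hΦ.locallyLipschitz.continuous
  have hWc : Continuous W := hW.locallyLipschitz.continuous
  set A : E → EReal := conj Φ with hA
  set B : E → EReal := conj W with hB
  set ξ : E → ℝ := fun y => if A y = ⊤ then (2:ℝ) else if B y = ⊤ then (-2:ℝ)
    else Real.arctan ((A y).toReal - (B y).toReal) with hξdef
  have hAmeas : Measurable A := measurable_conj
  have hBmeas : Measurable B := measurable_conj
  have hξmeas : Measurable ξ := by
    refine Measurable.ite (hAmeas (measurableSet_singleton ⊤)) measurable_const ?_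
    refine Measurable.ite (hBmeas (measurableSet_singleton ⊤)) measurable_const ?_
    exact Real.continuous_arctan.measurable.comp
      ((measurable_ereal_toReal.comp hAmeas).sub (measurable_ereal_toReal.comp hBmeas))
  have hpi := Real.pi_lt_d2
  have hξbdd : ∀ y, |ξ y| ≤ 2 := by
    intro y
    rw [abs_le]
    simp only [hξdef]
    split_ifs with h1 h2
    · norm_num
    · norm_num
    · have ha := Real.arctan_lt_pi_div_two ((A y).toReal - (B y).toReal)
      have hb := Real.neg_pi_div_two_lt_arctan ((A y).toReal - (B y).toReal)
      constructor <;> linarith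
  set m : E → ℝ := fun x => Real.arctan (W x - Φ x) with hm
  have hmmeas : Measurable m := (Real.continuous_arctan.comp (hWc.sub hΦc)).measurable
  have hmbdd : ∀ x, |m x| ≤ 2 := by
    intro x
    rw [abs_le]
    have ha := Real.arctan_lt_pi_div_two (W x - Φ x)
    have hb := Real.neg_pi_div_two_lt_arctan (W x - Φ x)
    constructor <;> simp only [hm] <;> linarith
  -- pointwise inequalities
  have hfs : ∀ᵐ x ∂μ, m x ≤ ξ (f x) := by
    filter_upwards [hf] with x hx
    have hBfx : B (f x) = ((⟪x, f x⟫_ℝ - W x : ℝ) : EReal) := conj_of_hasGradientAt hW hx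
    have hA1 : ((⟪x, f x⟫_ℝ - Φ x : ℝ) : EReal) ≤ A (f x) := conj_le hΦc (f x) x
    simp only [hξdef, hm]
    split_ifs with h1 h2
    · have := Real.arctan_lt_pi_div_two (W x - Φ x); linarith
    · exact absurd h2 (by rw [hBfx]; exact EReal.coe_ne_top _)
    · have hAne : A (f x) ≠ ⊥ := conj_ne_bot Φ (f x)
      have hAR : (⟪x, f x⟫_ℝ - Φ x) ≤ (A (f x)).toReal := by
        rw [← EReal.coe_toReal h1 hAne] at hA1
        exact EReal.coe_le_coe_iff.1 hA1
      have hBR : (B (f x)).toReal = ⟪x, f x⟫_ℝ - W x := by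
        rw [hBfx]; exact EReal.toReal_coe _
      refine Real.arctan_strictMono.monotone ?_
      rw [hBR]; linarith
  have hgs : ∀ᵐ x ∂μ, ξ (g x) ≤ m x := by
    filter_upwards [hg] with x hx
    have hAgx : A (g x) = ((⟪x, g x⟫_ℝ - Φ x : ℝ) : EReal) := conj_of_hasGradientAt hΦ hx
    have hB1 : ((⟪x, g x⟫_ℝ - W x : ℝ) : EReal) ≤ B (g x) := conj_le hWc (g x) x
    simp only [hξdef, hm]
    split_ifs with h1 h2
    · exact absurd h1 (by rw [hAgx]; exact EReal.coe_ne_top _)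
    · have := Real.neg_pi_div_two_lt_arctan (W x - Φ x); linarith
    · have hBne : B (g x) ≠ ⊥ := conj_ne_bot W (g x)
      have hBR : (⟪x, g x⟫_ℝ - W x) ≤ (B (g x)).toReal := by
        rw [← EReal.coe_toReal h2 hBne] at hB1
        exact EReal.coe_le_coe_iff.1 hB1
      have hAR : (A (g x)).toReal = ⟪x, g x⟫_ℝ - Φ x := by
        rw [hAgx]; exact EReal.toReal_coe _
      refine Real.arctan_strictMono.monotone ?_
      rw [hAR]; linarith
  -- integrability
  have hfsm : AEStronglyMeasurable (fun x => ξ (f x)) μ :=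
    (hξmeas.comp_aemeasurable hfm).aestronglyMeasurable
  have hgsm : AEStronglyMeasurable (fun x => ξ (g x)) μ :=
    (hξmeas.comp_aemeasurable hgm).aestronglyMeasurable
  have hfi : Integrable (fun x => ξ (f x)) μ :=
    Integrable.mono' (integrable_const 2) hfsm
      (ae_of_all _ fun x => by rw [Real.norm_eq_abs]; exact hξbdd _)
  have hgi : Integrable (fun x => ξ (g x)) μ :=
    Integrable.mono' (integrable_const 2) hgsm
      (ae_of_all _ fun x => by rw [Real.norm_eq_abs]; exact hξbdd _)
  have hmi : Integrable m μ :=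
    Integrable.mono' (integrable_const 2) hmmeas.aestronglyMeasurable
      (ae_of_all _ fun x => by rw [Real.norm_eq_abs]; exact hmbdd _)
  have hint : ∫ x, ξ (f x) ∂μ = ∫ x, ξ (g x) ∂μ := by
    rw [← integral_map hfm hξmeas.aestronglyMeasurable, hmap,
      integral_map hgm hξmeas.aestronglyMeasurable]
  have hI : (0:ℝ) ≤ ∫ x, (ξ (f x) - m x) ∂μ :=
    integral_nonneg_of_ae (by filter_upwards [hfs] with x hx; simp only [Pi.zero_apply]; linarith)
  have hJ : (0:ℝ) ≤ ∫ x, (m x - ξ (g x)) ∂μ :=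
    integral_nonneg_of_ae (by filter_upwards [hgs] with x hx; simp only [Pi.zero_apply]; linarith)
  have hIJ : ∫ x, (ξ (f x) - m x) ∂μ + ∫ x, (m x - ξ (g x)) ∂μ = 0 := by
    rw [integral_sub hfi hmi, integral_sub hmi hgi]
    linarith
  have hI0 : ∫ x, (ξ (f x) - m x) ∂μ = 0 := by linarith
  have hae0 : ∀ᵐ x ∂μ, ξ (f x) - m x = 0 := by
    have := (integral_eq_zero_iff_of_nonneg_ae
      (by filter_upwards [hfs] with x hx; simp only [Pi.zero_apply, Pi.sub_apply]; linarith)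
      (hfi.sub hmi)).1 hI0
    filter_upwards [this] with x hx
    simpa using hx
  -- extraction
  filter_upwards [hae0, hf, hg] with x h0 hfx hgx
  have hBfx : B (f x) = ((⟪x, f x⟫_ℝ - W x : ℝ) : EReal) := conj_of_hasGradientAt hW hfx
  have hξm : ξ (f x) = m x := by linarith
  have hAne_top : A (f x) ≠ ⊤ := by
    intro htop
    have h2 : ξ (f x) = 2 := by simp only [hξdef]; rw [if_pos htop]
    have harct := Real.arctan_lt_pi_div_two (W x - Φ x)
    rw [h2] at hξm
    simp only [hm] at hξm
    linarith
  have hBne_top : B (f x) ≠ ⊤ := by rw [hBfx]; exact EReal.coe_ne_top _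
  have hval : ξ (f x) = Real.arctan ((A (f x)).toReal - (B (f x)).toReal) := by
    simp only [hξdef]; rw [if_neg hAne_top, if_neg hBne_top]
  have hBR : (B (f x)).toReal = ⟪x, f x⟫_ℝ - W x := by
    rw [hBfx]; exact EReal.toReal_coe _
  have heq : (A (f x)).toReal - (B (f x)).toReal = W x - Φ x := by
    refine Real.arctan_injective ?_
    rw [← hval, hξm]
  have hAval : (A (f x)).toReal = ⟪x, f x⟫_ℝ - Φ x := by
    rw [hBR] at heq; linarith
  have hsub : ∀ z, Φ x + ⟪f x, z - x⟫_ℝ ≤ Φ z := by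
    intro z
    have h1 : ((⟪z, f x⟫_ℝ - Φ z : ℝ) : EReal) ≤ A (f x) := conj_le hΦc (f x) z
    rw [← EReal.coe_toReal hAne_top (conj_ne_bot Φ (f x)), EReal.coe_le_coe_iff] at h1
    rw [hAval] at h1
    have h2 : ⟪f x, z - x⟫_ℝ = ⟪z, f x⟫_ℝ - ⟪x, f x⟫_ℝ := by
      rw [inner_sub_right, real_inner_comm (f x) z, real_inner_comm (f x) x]
    rw [h2]; linarith
  exact Stmt13Aux.eq_gradient_of_subgradient hgx hsub

end

end Stmt13Core

open MeasureTheory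

section StmtMain

open Set Filter Topology InnerProductSpace TopologicalSpace

/-- if X and Z are μ-comonotonic random vectors (X = Q_X(U), Z = Q_Z(U)
for a common U =_d μ), then X is μ-Bickel-Lehmann less dispersed than X + Z: the
difference Q_{X+Z} - Q_X between the μ-quantile of X+Z and that of X is μ-a.e. the
gradient of a convex function. -/
theorem stmt_13 {d : ℕ} {Ω : Type*} [MeasurableSpace Ω]
    (P : Measure Ω) [IsProbabilityMeasure P]
    (μ : Measure (EuclideanSpace ℝ (Fin d))) [IsProbabilityMeasure μ]
    (hac : μ ≪ volume) (hμ2 : MemLp id 2 μ)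
    (X Z : Ω → EuclideanSpace ℝ (Fin d))
    (U : Ω → EuclideanSpace ℝ (Fin d)) (hU : Measurable U) (hUlaw : P.map U = μ)
    (QX QZ : EuclideanSpace ℝ (Fin d) → EuclideanSpace ℝ (Fin d))
    (VX VZ : EuclideanSpace ℝ (Fin d) → ℝ)
    (hVX : ConvexOn ℝ Set.univ VX) (hVZ : ConvexOn ℝ Set.univ VZ)
    (hQX : ∀ᵐ u ∂μ, QX u = gradient VX u) (hQZ : ∀ᵐ u ∂μ, QZ u = gradient VZ u)
    (hpushX : μ.map QX = P.map X) (hpushZ : μ.map QZ = P.map Z)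
    (hXU : ∀ᵐ ω ∂P, X ω = QX (U ω)) (hZU : ∀ᵐ ω ∂P, Z ω = QZ (U ω))
    (QXZ : EuclideanSpace ℝ (Fin d) → EuclideanSpace ℝ (Fin d))
    (W : EuclideanSpace ℝ (Fin d) → ℝ) (hW : ConvexOn ℝ Set.univ W)
    (hQXZ : ∀ᵐ u ∂μ, QXZ u = gradient W u)
    (hpushXZ : μ.map QXZ = P.map (fun ω => X ω + Z ω)) :
    ∃ V : EuclideanSpace ℝ (Fin d) → ℝ, ConvexOn ℝ Set.univ V ∧
      ∀ᵐ u ∂μ, QXZ u - QX u = gradient V u := by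
  classical
  -- measurability of gradients
  have hgradmeas : ∀ f : EuclideanSpace ℝ (Fin d) → ℝ, Measurable (gradient f) := by
    intro f
    have h1 : Measurable (fun x => fderiv ℝ f x) := measurable_fderiv ℝ f
    exact ((InnerProductSpace.toDual ℝ
      (EuclideanSpace ℝ (Fin d))).symm.continuous.measurable).comp h1
  have hQXZ' : QXZ =ᵐ[μ] (gradient W) := hQXZ
  have hQX' : QX =ᵐ[μ] (gradient VX) := hQX
  have hQZ' : QZ =ᵐ[μ] (gradient VZ) := hQZ
  have hQXZm : AEMeasurable QXZ μ := ((hgradmeas W).aemeasurable).congr hQXZ'.symm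
  have hQXm : AEMeasurable QX μ := ((hgradmeas VX).aemeasurable).congr hQX'.symm
  have hQZm : AEMeasurable QZ μ := ((hgradmeas VZ).aemeasurable).congr hQZ'.symm
  set g : EuclideanSpace ℝ (Fin d) → EuclideanSpace ℝ (Fin d) := fun u => QX u + QZ u with hgdef
  have hgm : AEMeasurable g μ := hQXm.add hQZm
  -- pushforward equality
  have h1 : P.map (fun ω => X ω + Z ω) = P.map (fun ω => g (U ω)) := by
    apply Measure.map_congr
    filter_upwards [hXU, hZU] with ω e1 e2
    simp only [hgdef, e1, e2]
  have hgU : AEMeasurable g (P.map U) := by rw [hUlaw]; exact hgm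
  have h2 : (P.map U).map g = P.map (fun ω => g (U ω)) :=
    AEMeasurable.map_map_of_aemeasurable hgU hU.aemeasurable
  have hmap : μ.map QXZ = μ.map g := by
    rw [hpushXZ, h1, ← h2, hUlaw]
  -- a.e. differentiability from Rademacher
  have hdiff : ∀ f : EuclideanSpace ℝ (Fin d) → ℝ, ConvexOn ℝ Set.univ f →
      ∀ᵐ x ∂μ, DifferentiableAt ℝ f x := by
    intro f hf
    exact hac.ae_le (Stmt13Aux2.locallyLipschitz_ae_diff hf.locallyLipschitz)
  have hfd : ∀ᵐ x ∂μ, HasGradientAt W (QXZ x) x := by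
    filter_upwards [hdiff W hW, hQXZ] with x h1 h2
    rw [h2]; exact h1.hasGradientAt
  set Φ : EuclideanSpace ℝ (Fin d) → ℝ := fun x => VX x + VZ x with hΦdef
  have hΦ : ConvexOn ℝ Set.univ Φ := by
    have := hVX.add hVZ
    simpa [hΦdef, Pi.add_def] using this
  have hgd : ∀ᵐ x ∂μ, HasGradientAt Φ (g x) x := by
    filter_upwards [hdiff VX hVX, hdiff VZ hVZ, hQX, hQZ] with x h1 h2 e1 e2
    have g1 := h1.hasGradientAt
    have g2 := h2.hasGradientAt
    simp only [hgdef]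
    rw [e1, e2, hasGradientAt_iff_hasFDerivAt, map_add]
    exact g1.hasFDerivAt.add g2.hasFDerivAt
  -- uniqueness of gradient pushforwards
  have hkey : ∀ᵐ x ∂μ, QXZ x = g x :=
    Stmt13Core.gradient_pushforward_unique μ hΦ hW hfd hgd hQXZm hgm hmap
  refine ⟨VZ, hVZ, ?_⟩
  filter_upwards [hkey, hQZ] with x hx e
  rw [hx]
  simp only [hgdef]
  rw [add_sub_cancel_left]
  exact e

end StmtMain
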